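/- For each k > 0 there exists M_k > 0 such that the analytically continued lognormal Laplace transform φ satisfies |φ(z)| ≤ M_k |z|^{-k} for all z ∈ ℂ \ (-∞,0]. Explicitly, one may take M_k = (1/(2π)) Γ(k) e^{-μk + (σ²/2)k²} ∫_{-∞}^∞ e^{π|t| − (σ²/2)t²} dt. -/

import Mathlib

open MeasureTheory Complex Set

lemma abs_Gamma_le_aux {s : ℂ} (hs : 0 < s.re) : ‖Complex.Gamma s‖ ≤ Real.Gamma s.re := by
  rw [Complex.Gamma_eq_integral hs, Real.Gamma_eq_integral hs, Complex.GammaIntegral]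
  refine norm_integral_le_of_norm_le (Real.GammaIntegral_convergent hs) ?_
  filter_upwards [ae_restrict_mem measurableSet_Ioi] with x hx
  rw [norm_mul, Complex.norm_real,
    Complex.norm_cpow_eq_rpow_re_of_pos hx]
  simp [abs_of_pos (Real.exp_pos _), Complex.sub_re]

lemma integrable_exp_lin_sub_sq {b : ℝ} (hb : 0 < b) (c : ℝ) :
    Integrable (fun t : ℝ => Real.exp (c * t - b * t ^ 2)) := by
  have h : ∀ t : ℝ, c * t - b * t ^ 2 = c ^ 2 / (4 * b) + (-b * (t - c / (2 * b)) ^ 2) := by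
    intro t; field_simp; ring
  simp_rw [h, Real.exp_add]
  exact ((integrable_exp_neg_mul_sq hb).comp_sub_right (c / (2 * b))).const_mul _

lemma integrable_exp_abs_sub_sq {b : ℝ} (hb : 0 < b) (c : ℝ) :
    Integrable (fun t : ℝ => Real.exp (c * |t| - b * t ^ 2)) := by
  refine Integrable.mono' ((integrable_exp_lin_sub_sq hb c).add (integrable_exp_lin_sub_sq hb (-c)))
    ?_ ?_
  · exact (Continuous.aestronglyMeasurable (by fun_prop) :
      AEStronglyMeasurable (fun t : ℝ => Real.exp (c * |t| - b * t ^ 2)) volume)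
  · filter_upwards with t
    rw [Real.norm_eq_abs, abs_of_pos (Real.exp_pos _)]
    rcases abs_choice t with h | h <;> rw [h]
    · exact le_add_of_nonneg_right (Real.exp_pos _).le
    · rw [show c * -t = -c * t by ring]
      exact le_add_of_nonneg_left (Real.exp_pos _).le

/-- The analytic continuation of the lognormal Laplace transform, expressed via
the Mellin–Barnes integral along the line Re(s) = k. -/
noncomputable def lognormalLaplaceAC (μ σ k : ℝ) (z : ℂ) : ℂ :=
  (1 / (2 * Real.pi)) * ∫ t : ℝ,
    z ^ (-((k:ℂ) + t * Complex.I)) * Complex.Gamma (k + t * Complex.I) *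
      Complex.exp (-(μ:ℂ) * (k + t * Complex.I) + (σ:ℂ)^2 / 2 * (k + t * Complex.I)^2)

/-- For each k > 0 there exists M_k > 0 (explicitly,
M_k = (1/(2π)) Γ(k) e^{-μk + (σ²/2)k²} ∫ e^{π|t| − (σ²/2)t²} dt) such that the
analytically continued lognormal Laplace transform satisfies
|φ(z)| ≤ M_k |z|^{-k} on ℂ \ (-∞,0]. -/
theorem lognormal_laplace_decay (μ σ : ℝ) (hσ : 0 < σ) (k : ℝ) (hk : 0 < k) :
    ∃ M : ℝ, 0 < M ∧
      M = (1 / (2 * Real.pi)) * Real.Gamma k * Real.exp (-μ * k + σ^2 / 2 * k^2) *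
            ∫ t : ℝ, Real.exp (Real.pi * |t| - σ^2 / 2 * t^2) ∧
      ∀ z ∈ Complex.slitPlane, ‖lognormalLaplaceAC μ σ k z‖ ≤ M * ‖z‖ ^ (-k) := by
  have hb : 0 < σ ^ 2 / 2 := by positivity
  have hg : Integrable (fun t : ℝ => Real.exp (Real.pi * |t| - σ ^ 2 / 2 * t ^ 2)) :=
    integrable_exp_abs_sub_sq hb Real.pi
  have hIpos : 0 < ∫ t : ℝ, Real.exp (Real.pi * |t| - σ ^ 2 / 2 * t ^ 2) :=
    integral_exp_pos hg
  have hΓ : 0 < Real.Gamma k := Real.Gamma_pos_of_pos hk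
  refine ⟨_, ?_, rfl, ?_⟩
  · have := Real.pi_pos
    positivity
  intro z hz
  have hz0 : z ≠ 0 := Complex.slitPlane_ne_zero hz
  set A : ℝ := Real.exp (-μ * k + σ ^ 2 / 2 * k ^ 2) with hA
  set C : ℝ := Real.Gamma k * A * ‖z‖ ^ (-k) with hC
  have hzk : (0:ℝ) < ‖z‖ ^ (-k) := by
    apply Real.rpow_pos_of_pos
    simpa [norm_pos_iff] using hz0
  -- pointwise bound
  have key : ∀ t : ℝ,
      ‖z ^ (-((k:ℂ) + t * Complex.I)) * Complex.Gamma (k + t * Complex.I) *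
        Complex.exp (-(μ:ℂ) * (k + t * Complex.I) + (σ:ℂ)^2 / 2 * (k + t * Complex.I)^2)‖ ≤
      C * Real.exp (Real.pi * |t| - σ ^ 2 / 2 * t ^ 2) := by
    intro t
    have h1 : ‖z ^ (-((k:ℂ) + t * Complex.I))‖ = ‖z‖ ^ (-k) * Real.exp (z.arg * t) := by
      rw [Complex.norm_cpow_of_ne_zero hz0]
      have hre : (-((k:ℂ) + t * Complex.I)).re = -k := by simp
      have him : (-((k:ℂ) + t * Complex.I)).im = -t := by simp
      rw [hre, him]
      rw [mul_neg, Real.exp_neg, div_eq_mul_inv, inv_inv]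
    have h2 : ‖Complex.Gamma ((k:ℂ) + t * Complex.I)‖ ≤ Real.Gamma k := by
      have : ((k:ℂ) + t * Complex.I).re = k := by simp
      simpa [this] using abs_Gamma_le_aux (s := (k:ℂ) + t * Complex.I) (by rw [this]; exact hk)
    have h3 : ‖Complex.exp (-(μ:ℂ) * (k + t * Complex.I) + (σ:ℂ)^2 / 2 * (k + t * Complex.I)^2)‖
        = Real.exp (-μ * k + σ ^ 2 / 2 * (k ^ 2 - t ^ 2)) := by
      rw [Complex.norm_exp]
      congr 1
      simp [Complex.add_re, Complex.mul_re, Complex.mul_im, Complex.div_re, Complex.div_im,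
        Complex.normSq, pow_two]
    rw [norm_mul, norm_mul, h1, h3]
    have harg : Real.exp (z.arg * t) ≤ Real.exp (Real.pi * |t|) := by
      apply Real.exp_le_exp.mpr
      calc z.arg * t ≤ |z.arg * t| := le_abs_self _
        _ = |z.arg| * |t| := abs_mul _ _
        _ ≤ Real.pi * |t| := by
            exact mul_le_mul_of_nonneg_right (Complex.abs_arg_le_pi z) (abs_nonneg t)
    have : ‖z‖ ^ (-k) * Real.exp (z.arg * t) * ‖Complex.Gamma ((k:ℂ) + t * Complex.I)‖ *
        Real.exp (-μ * k + σ ^ 2 / 2 * (k ^ 2 - t ^ 2)) ≤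
        ‖z‖ ^ (-k) * Real.exp (Real.pi * |t|) * Real.Gamma k *
        Real.exp (-μ * k + σ ^ 2 / 2 * (k ^ 2 - t ^ 2)) := by
      gcongr
    refine this.trans (le_of_eq ?_)
    have e1 : Real.exp (Real.pi * |t|) * Real.exp (-μ * k + σ ^ 2 / 2 * (k ^ 2 - t ^ 2)) =
        Real.exp (-μ * k + σ ^ 2 / 2 * k ^ 2) * Real.exp (Real.pi * |t| - σ ^ 2 / 2 * t ^ 2) := by
      rw [← Real.exp_add, ← Real.exp_add]; ring_nf
    rw [hC, hA]
    linear_combination (‖z‖ ^ (-k) * Real.Gamma k) * e1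
  -- integral bound
  have hbound : ‖∫ t : ℝ,
      z ^ (-((k:ℂ) + t * Complex.I)) * Complex.Gamma (k + t * Complex.I) *
        Complex.exp (-(μ:ℂ) * (k + t * Complex.I) + (σ:ℂ)^2 / 2 * (k + t * Complex.I)^2)‖ ≤
      C * ∫ t : ℝ, Real.exp (Real.pi * |t| - σ ^ 2 / 2 * t ^ 2) := by
    rw [← integral_const_mul]
    exact norm_integral_le_of_norm_le (hg.const_mul C) (Filter.Eventually.of_forall key)
  have hpi : ‖(1 / (2 * (Real.pi : ℂ)))‖ = 1 / (2 * Real.pi) := by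
    have h2 : ((1:ℂ) / (2 * (Real.pi : ℂ))) = ((1 / (2 * Real.pi) : ℝ) : ℂ) := by
      push_cast; ring
    rw [h2, Complex.norm_real, Real.norm_eq_abs, abs_of_pos (by positivity)]
  rw [lognormalLaplaceAC, norm_mul]
  calc ‖(1 / (2 * (Real.pi:ℂ)))‖ * ‖∫ t : ℝ,
        z ^ (-((k:ℂ) + t * Complex.I)) * Complex.Gamma (k + t * Complex.I) *
        Complex.exp (-(μ:ℂ) * (k + t * Complex.I) + (σ:ℂ)^2 / 2 * (k + t * Complex.I)^2)‖
      ≤ (1 / (2 * Real.pi)) * (C * ∫ t : ℝ, Real.exp (Real.pi * |t| - σ ^ 2 / 2 * t ^ 2)) := by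
        rw [hpi]
        exact mul_le_mul_of_nonneg_left hbound (by positivity)
    _ = (1 / (2 * Real.pi) * Real.Gamma k * Real.exp (-μ * k + σ^2 / 2 * k^2) *
          ∫ t : ℝ, Real.exp (Real.pi * |t| - σ^2 / 2 * t^2)) * ‖z‖ ^ (-k) := by
        rw [hC, hA]; ring
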